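/- arXiv:2006.05940 — 2 statements merged into one kernel-verified Lean document; each statement's English description precedes it below -/
import Mathlib

section
/- Let n ≥ 2 and let u be a convex continuous function on the open ball B₂ ⊂ ℝⁿ of radius 2 centered at the origin, such that u ≥ 0 in B₂, u = 0 on the slice {x ∈ B₂ : x_n = 0}, and u(t·e_n) = o(t) as t → 0⁺ (i.e. u(t·e_n)/t → 0 as t → 0⁺). Then u is NOT a viscosity solution of σ₂(D²u) ≥ 1 in B₂: there exist a 2-convex C² function φ and a point x₀ ∈ B₂ such that φ touches u from above at x₀ and σ₂(D²φ(x₀)) < 1. -/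
open scoped Topology

/-- The Hessian matrix of `φ` at `x`, defined via the second iterated Fréchet derivative. -/
noncomputable def hessian {n : ℕ} (φ : EuclideanSpace ℝ (Fin n) → ℝ)
    (x : EuclideanSpace ℝ (Fin n)) : Matrix (Fin n) (Fin n) ℝ :=
  fun i j => iteratedFDeriv ℝ 2 φ x ![EuclideanSpace.single i 1, EuclideanSpace.single j 1]

/-- `σ₁(M) = tr M`. -/
noncomputable def sigma1 {n : ℕ} (M : Matrix (Fin n) (Fin n) ℝ) : ℝ := M.trace

/-- `σ₂(M) = ((tr M)² − tr (M²)) / 2`. -/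
noncomputable def sigma2 {n : ℕ} (M : Matrix (Fin n) (Fin n) ℝ) : ℝ :=
  (M.trace ^ 2 - (M * M).trace) / 2

/-- A `C²` function is 2-convex if `σ₁(D²φ) ≥ 0` and `σ₂(D²φ) ≥ 0` everywhere. -/
def TwoConvex {n : ℕ} (φ : EuclideanSpace ℝ (Fin n) → ℝ) : Prop :=
  ContDiff ℝ 2 φ ∧ ∀ x, 0 ≤ sigma1 (hessian φ x) ∧ 0 ≤ sigma2 (hessian φ x)

/-- `u` is a viscosity solution of `σ₂(D²u) ≥ 1` in `Ω`: whenever a 2-convex `C²`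
function `φ` touches `u` from above at `x₀ ∈ Ω`, we have `σ₂(D²φ(x₀)) ≥ 1`. -/
def ViscositySupersol {n : ℕ} (u : EuclideanSpace ℝ (Fin n) → ℝ)
    (Ω : Set (EuclideanSpace ℝ (Fin n))) : Prop :=
  ∀ φ : EuclideanSpace ℝ (Fin n) → ℝ, TwoConvex φ →
    ∀ x₀ ∈ Ω, φ x₀ = u x₀ → (∀ᶠ x in 𝓝 x₀, u x ≤ φ x) →
      1 ≤ sigma2 (hessian φ x₀)

/-! ### Auxiliary machinery for quadratic test functions -/

/-- The `i`-th coordinate projection on Euclidean space, as a continuous linear map. -/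
noncomputable def P {n : ℕ} (i : Fin n) : EuclideanSpace ℝ (Fin n) →L[ℝ] ℝ :=
  EuclideanSpace.proj i

@[simp] lemma P_apply {n : ℕ} (i : Fin n) (x : EuclideanSpace ℝ (Fin n)) : P i x = x i := rfl

section quad
variable {n : ℕ} (c : Fin n → ℝ) (d k : ℝ) (N : Fin n)

/-- A diagonal quadratic polynomial on Euclidean space. -/
noncomputable def quadf : EuclideanSpace ℝ (Fin n) → ℝ :=
  fun x => (∑ i, c i * (x i)^2) + (d * x N + k)

noncomputable def quadA (c : Fin n → ℝ) :
    EuclideanSpace ℝ (Fin n) →L[ℝ] (EuclideanSpace ℝ (Fin n) →L[ℝ] ℝ) :=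
  ∑ i, (2 * c i) • ((P i).smulRight (P i))

lemma quadf_hasFDerivAt (x : EuclideanSpace ℝ (Fin n)) :
    HasFDerivAt (quadf c d k N) (quadA c x + d • P N) x := by
  have h1 : ∀ i : Fin n, HasFDerivAt (fun x : EuclideanSpace ℝ (Fin n) => c i * (x i)^2)
      ((2 * c i * x i) • P i) x := by
    intro i
    have hp : HasFDerivAt (fun x : EuclideanSpace ℝ (Fin n) => x i) (P i) x :=
      (P i).hasFDerivAt
    have h2 := (hp.mul hp).const_mul (c i)
    have h3 : (fun x : EuclideanSpace ℝ (Fin n) => c i * (x i * x i))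
        = (fun x : EuclideanSpace ℝ (Fin n) => c i * (x i)^2) := by
      funext y; ring
    simp only [Pi.mul_apply] at h2
    rw [h3] at h2
    refine h2.congr_fderiv ?_
    ext v
    simp
    ring
  have hsum : HasFDerivAt (fun x : EuclideanSpace ℝ (Fin n) => ∑ i, c i * (x i)^2)
      (∑ i, (2 * c i * x i) • P i) x :=
    HasFDerivAt.fun_sum (fun i _ => h1 i)
  have hp : HasFDerivAt (fun x : EuclideanSpace ℝ (Fin n) => x N) (P N) x :=
    (P N).hasFDerivAt
  have hlin : HasFDerivAt (fun x : EuclideanSpace ℝ (Fin n) => d * x N + k) (d • P N) x :=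
    (hp.const_mul d).add_const k
  have h := hsum.add hlin
  refine HasFDerivAt.congr_fderiv (f := quadf c d k N) h ?_
  ext v
  simp [quadA, ContinuousLinearMap.sum_apply, P]
  exact Finset.sum_congr rfl (fun i _ => by ring)

lemma quadf_fderiv : fderiv ℝ (quadf c d k N) = fun x => quadA c x + d • P N :=
  funext fun x => (quadf_hasFDerivAt c d k N x).fderiv

lemma quadf_contDiff : ContDiff ℝ 2 (quadf c d k N) := by
  have h1 : ∀ i : Fin n, ContDiff ℝ 2 (fun x : EuclideanSpace ℝ (Fin n) => c i * (x i)^2) := by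
    intro i
    have hfun : (fun x : EuclideanSpace ℝ (Fin n) => c i * (x i)^2)
        = fun x => c i * (P i x * P i x) := by
      funext y; show c i * (y i)^2 = c i * (y i * y i); ring
    rw [hfun]
    exact contDiff_const.mul ((P i).contDiff.mul (P i).contDiff)
  have h2 : ContDiff ℝ 2 (fun x : EuclideanSpace ℝ (Fin n) => d * x N + k) := by
    have hfun : (fun x : EuclideanSpace ℝ (Fin n) => d * x N + k)
        = fun x => d * P N x + k := rfl
    rw [hfun]
    exact (contDiff_const.mul (P N).contDiff).add contDiff_const
  exact (ContDiff.sum (fun i _ => h1 i)).add h2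

lemma quadf_hessian (x : EuclideanSpace ℝ (Fin n)) :
    hessian (quadf c d k N) x = Matrix.diagonal (fun i => 2 * c i) := by
  funext i j
  unfold hessian
  rw [iteratedFDeriv_two_apply, quadf_fderiv]
  have h : HasFDerivAt (fun x => quadA c x + d • P N) (quadA c) x :=
    (quadA c).hasFDerivAt.add_const _
  rw [h.fderiv]
  simp only [Matrix.cons_val_zero, Matrix.cons_val_one, Matrix.head_cons]
  simp [quadA, ContinuousLinearMap.sum_apply, ContinuousLinearMap.smulRight_apply, P,
    EuclideanSpace.single_apply, Matrix.diagonal]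

end quad

lemma sum_ite_fin {n : ℕ} (N : Fin n) (p q : ℝ) :
    ∑ i : Fin n, (if i = N then p else q) = p + ((n : ℝ) - 1) * q := by
  have h : ∀ i : Fin n, (if i = N then p else q)
      = (if i = N then p - q else 0) + q := by
    intro i; by_cases h : i = N <;> simp [h]
  calc ∑ i : Fin n, (if i = N then p else q)
      = ∑ i : Fin n, ((if i = N then p - q else 0) + q) := Finset.sum_congr rfl fun i _ => h i
    _ = (p - q) + (n : ℝ) * q := by
        rw [Finset.sum_add_distrib, Finset.sum_ite_eq' Finset.univ N (fun _ => p - q),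
          Finset.sum_const, Finset.card_univ, Fintype.card_fin, nsmul_eq_mul]
        simp
    _ = p + ((n : ℝ) - 1) * q := by ring

lemma norm_sq_eq {n : ℕ} (x : EuclideanSpace ℝ (Fin n)) : ‖x‖^2 = ∑ i, (x i)^2 := by
  rw [EuclideanSpace.norm_eq, Real.sq_sqrt (by positivity)]
  exact Finset.sum_congr rfl fun i _ => by rw [Real.norm_eq_abs, sq_abs]

lemma sigma1_diag_ite {n : ℕ} (N : Fin n) (bb aa : ℝ) :
    sigma1 (Matrix.diagonal (fun i : Fin n => if i = N then bb else aa))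
      = bb + ((n : ℝ) - 1) * aa := by
  rw [sigma1, Matrix.trace_diagonal, sum_ite_fin]

lemma sigma2_diag_ite {n : ℕ} (N : Fin n) (bb aa : ℝ) :
    sigma2 (Matrix.diagonal (fun i : Fin n => if i = N then bb else aa))
      = ((n : ℝ) - 1) * aa * bb + ((n : ℝ) - 1) * ((n : ℝ) - 2) * aa^2 / 2 := by
  rw [sigma2, Matrix.diagonal_mul_diagonal, Matrix.trace_diagonal, Matrix.trace_diagonal]
  have h1 : ∑ i : Fin n, (if i = N then bb else aa) = bb + ((n : ℝ) - 1) * aa :=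
    sum_ite_fin N bb aa
  have h2 : ∑ i : Fin n, ((if i = N then bb else aa) * (if i = N then bb else aa))
      = bb^2 + ((n : ℝ) - 1) * aa^2 := by
    have : ∀ i : Fin n, (if i = N then bb else aa) * (if i = N then bb else aa)
        = (if i = N then bb^2 else aa^2) := by
      intro i; by_cases h : i = N <;> simp [h] <;> ring
    rw [Finset.sum_congr rfl fun i _ => this i, sum_ite_fin]
  rw [h1, h2]
  ring

set_option maxHeartbeats 2000000 in
/-- A nonnegative convex function on `B₂` vanishing on the slice `{x_n = 0}` with
`u(t·e_n) = o(t)` as `t → 0⁺` cannot solve `σ₂(D²u) ≥ 1` in the viscosity sense: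
some 2-convex `C²` function touches `u` from above at a point of `B₂` with `σ₂ < 1`. -/
theorem not_viscosity_supersol {n : ℕ} (hn : 2 ≤ n)
    (u : EuclideanSpace ℝ (Fin n) → ℝ)
    (huconv : ConvexOn ℝ (Metric.ball 0 2) u)
    (hucont : ContinuousOn u (Metric.ball 0 2))
    (hnonneg : ∀ x ∈ Metric.ball (0 : EuclideanSpace ℝ (Fin n)) 2, 0 ≤ u x)
    (hslice : ∀ x ∈ Metric.ball (0 : EuclideanSpace ℝ (Fin n)) 2,
      x (⟨n - 1, by omega⟩ : Fin n) = 0 → u x = 0)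
    (hlittleo : Filter.Tendsto
      (fun t : ℝ => u (t • EuclideanSpace.single (⟨n - 1, by omega⟩ : Fin n) 1) / t)
      (𝓝[>] (0 : ℝ)) (𝓝 0)) :
    ∃ φ : EuclideanSpace ℝ (Fin n) → ℝ, ∃ x₀ : EuclideanSpace ℝ (Fin n),
      TwoConvex φ ∧ x₀ ∈ Metric.ball (0 : EuclideanSpace ℝ (Fin n)) 2 ∧
      φ x₀ = u x₀ ∧ (∀ᶠ x in 𝓝 x₀, u x ≤ φ x) ∧
      sigma2 (hessian φ x₀) < 1 := by
  classical
  set N : Fin n := (⟨n - 1, by omega⟩ : Fin n) with hNdef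
  set e : EuclideanSpace ℝ (Fin n) := EuclideanSpace.single N 1 with hedef
  set q : ℝ → ℝ := fun s => u ((2*s) • e) / (2*s) with hqdef
  -- the scale `s` is chosen so that `σ₂` of the test function is `< 1`
  set S : ℝ → ℝ := fun s => ((n:ℝ)-1) * ((8*q s+s) * (16*q s+s))
      + ((n:ℝ)-1) * ((n:ℝ)-2) * (s*(8*q s+s))^2 / 2 with hSdef
  have h2s : Filter.Tendsto (fun s : ℝ => 2*s) (𝓝[>] (0:ℝ)) (𝓝[>] (0:ℝ)) := by
    apply tendsto_nhdsWithin_of_tendsto_nhds_of_eventually_within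
    · have h := ((continuous_const.mul continuous_id :
          Continuous (fun s : ℝ => 2*s)).tendsto (0:ℝ)).mono_left
        (nhdsWithin_le_nhds (s := Set.Ioi (0:ℝ)))
      have h' : Filter.Tendsto (fun s : ℝ => 2*s) (𝓝[>] (0:ℝ)) (𝓝 (2*0)) := h
      simpa using h'
    · filter_upwards [self_mem_nhdsWithin] with x hx
      exact mul_pos two_pos (Set.mem_Ioi.mp hx)
  have hq0 : Filter.Tendsto q (𝓝[>] (0:ℝ)) (𝓝 0) := by
    have := hlittleo.comp h2s
    simpa [hqdef, hedef, Function.comp_def] using this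
  have hsid : Filter.Tendsto (fun s : ℝ => s) (𝓝[>] (0:ℝ)) (𝓝 0) :=
    Filter.tendsto_id.mono_right nhdsWithin_le_nhds
  have hS0 : Filter.Tendsto S (𝓝[>] (0:ℝ)) (𝓝 0) := by
    have h8 : Filter.Tendsto (fun s => 8 * q s + s) (𝓝[>] (0:ℝ)) (𝓝 0) := by
      have := (hq0.const_mul 8).add hsid
      simpa using this
    have h16 : Filter.Tendsto (fun s => 16 * q s + s) (𝓝[>] (0:ℝ)) (𝓝 0) := by
      have := (hq0.const_mul 16).add hsid
      simpa using this
    have hmul : Filter.Tendsto (fun s => (8*q s+s) * (16*q s+s)) (𝓝[>] (0:ℝ)) (𝓝 0) := by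
      simpa using h8.mul h16
    have hsq : Filter.Tendsto (fun s => (s*(8*q s+s))^2) (𝓝[>] (0:ℝ)) (𝓝 0) := by
      have := (hsid.mul h8).pow 2
      simpa using this
    have := (hmul.const_mul ((n:ℝ)-1)).add ((hsq.const_mul (((n:ℝ)-1) * ((n:ℝ)-2))).div_const 2)
    simpa [hSdef, mul_div_assoc] using this
  have hev : ∀ᶠ s in 𝓝[>] (0:ℝ), S s < 1 := hS0.eventually_lt_const one_pos
  have hmem : ∀ᶠ s in 𝓝[>] (0:ℝ), s ∈ Set.Ioo (0:ℝ) (1/2) :=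
    Ioo_mem_nhdsGT_of_mem ⟨le_refl 0, by norm_num⟩
  obtain ⟨s, hSs, hs0, hs12⟩ := (hev.and hmem).exists
  have hsne : s ≠ 0 := ne_of_gt hs0
  have h2se : (2*s) • e ∈ Metric.ball (0 : EuclideanSpace ℝ (Fin n)) 2 := by
    rw [mem_ball_zero_iff, norm_smul, hedef, EuclideanSpace.norm_single]
    rw [Real.norm_eq_abs, Real.norm_eq_abs, abs_one, mul_one, abs_of_pos (by linarith)]
    linarith
  set G : ℝ := u ((2*s) • e) / 2 with hGdef
  have hG0 : 0 ≤ G := div_nonneg (hnonneg _ h2se) (by norm_num)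
  have hGq : G = s * q s := by rw [hGdef, hqdef]; field_simp
  set a : ℝ := 8*G + s^2 with hadef
  set b : ℝ := (16*G + s^2)/s^2 with hbdef
  have ha0 : 0 < a := by positivity
  have hb0 : 0 < b := by positivity
  set c : Fin n → ℝ := fun i => if i = N then b/2 else a/2 with hcdef
  set d : ℝ := -(b*(s/2)) with hddef
  set k : ℝ := b/2*(s/2)^2 with hkdef
  have hcc : (fun i : Fin n => 2 * c i) = fun i => if i = N then b else a := by
    funext i; by_cases h : i = N <;> simp [hcdef, h] <;> ring
  have hsig1 : sigma1 (Matrix.diagonal (fun i : Fin n => 2 * c i)) = b + ((n:ℝ)-1)*a := by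
    rw [hcc, sigma1_diag_ite]
  have hsig2 : sigma2 (Matrix.diagonal (fun i : Fin n => 2 * c i))
      = ((n:ℝ)-1)*a*b + ((n:ℝ)-1)*((n:ℝ)-2)*a^2/2 := by rw [hcc, sigma2_diag_ite]
  have hn2 : (2:ℝ) ≤ (n:ℝ) := by exact_mod_cast hn
  have hsig2lt : ((n:ℝ)-1)*a*b + ((n:ℝ)-1)*((n:ℝ)-2)*a^2/2 < 1 := by
    have hab : a * b = (8*q s + s)*(16*q s + s) := by
      rw [hadef, hbdef, hGq]; field_simp
    have ha2 : a^2 = (s*(8*q s+s))^2 := by rw [hadef, hGq]; ring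
    have hrw : ((n:ℝ)-1)*a*b + ((n:ℝ)-1)*((n:ℝ)-2)*a^2/2 = S s := by
      simp only [hSdef]
      rw [← hab, ← ha2]; ring
    rw [hrw]; exact hSs
  -- geometry
  set w : EuclideanSpace ℝ (Fin n) → ℝ :=
    fun x => ∑ i ∈ Finset.univ.erase N, (P i x)^2 with hwdef
  have hwcont : Continuous w := by
    apply continuous_finset_sum; intro i _; exact (P i).continuous.pow 2
  have hwnonneg : ∀ x, 0 ≤ w x := fun x => Finset.sum_nonneg fun i _ => sq_nonneg _
  have hnormsq : ∀ x : EuclideanSpace ℝ (Fin n), ‖x‖^2 = (x N)^2 + w x := by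
    intro x
    rw [norm_sq_eq x, hwdef, ← Finset.add_sum_erase Finset.univ _ (Finset.mem_univ N)]
    simp
  set R : Set (EuclideanSpace ℝ (Fin n)) := {x | w x ≤ 1/4 ∧ x N ∈ Set.Icc 0 s} with hRdef
  have hRsub : R ⊆ Metric.ball 0 2 := by
    intro x hx
    rw [Metric.mem_ball, dist_zero_right]
    obtain ⟨hw, h0, hs'⟩ := hx
    have h1 : ‖x‖^2 < 4 := by rw [hnormsq x]; nlinarith
    nlinarith [norm_nonneg x]
  have hRclosed : IsClosed R := by
    have : R = {x | w x ≤ 1/4} ∩ ((fun x => P N x) ⁻¹' Set.Icc 0 s) := rfl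
    rw [this]
    exact (isClosed_le hwcont continuous_const).inter
      (IsClosed.preimage (P N).continuous isClosed_Icc)
  have hRcompact : IsCompact R :=
    Metric.isCompact_of_isClosed_isBounded hRclosed
      (Metric.isBounded_ball.subset hRsub)
  have hcoord : ∀ (t : ℝ) (i : Fin n), (t • e) i = if i = N then t else 0 := by
    intro t i
    have h1 : (t • e) i = t * (EuclideanSpace.single N 1 : EuclideanSpace ℝ (Fin n)) i := by
      rw [hedef]; rfl
    rw [h1, EuclideanSpace.single_apply]
    by_cases h : i = N <;> simp [h]
  have hwte : ∀ t : ℝ, w (t • e) = 0 := by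
    intro t; rw [hwdef]; apply Finset.sum_eq_zero; intro i hi
    have hiN : i ≠ N := (Finset.mem_erase.1 hi).1
    have hz : (t • e) i = 0 := by rw [hcoord t i, if_neg hiN]
    show ((t • e) i)^2 = 0
    rw [hz]; norm_num
  have hx₀R : (s/2) • e ∈ R := by
    refine ⟨by rw [hwte]; norm_num, ?_⟩
    rw [hcoord, if_pos rfl, Set.mem_Icc]
    exact ⟨by linarith, by linarith⟩
  -- upper bound for u on R
  have hub : ∀ x ∈ R, u x ≤ G := by
    intro x hx
    obtain ⟨hxw, hx0, hxs⟩ := hx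
    set z2 : EuclideanSpace ℝ (Fin n) := (2 * x N) • e with hz2def
    set y : EuclideanSpace ℝ (Fin n) := (2:ℝ) • x - z2 with hydef
    have hyN : y N = 0 := by
      rw [hydef, hz2def]
      rw [PiLp.sub_apply, PiLp.smul_apply, hcoord]
      simp [smul_eq_mul]
    have hyi : ∀ i : Fin n, i ≠ N → y i = 2 * x i := by
      intro i hiN
      rw [hydef, hz2def, PiLp.sub_apply, PiLp.smul_apply, hcoord]
      simp [smul_eq_mul, hiN]
    have hwy : w y = 4 * w x := by
      rw [hwdef, Finset.mul_sum]
      apply Finset.sum_congr rfl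
      intro i hi
      have hiN : i ≠ N := (Finset.mem_erase.1 hi).1
      simp only [P_apply, hyi i hiN]; ring
    have hyball : y ∈ Metric.ball (0 : EuclideanSpace ℝ (Fin n)) 2 := by
      rw [mem_ball_zero_iff]
      have h1 : ‖y‖^2 ≤ 1 := by rw [hnormsq y, hyN, hwy]; nlinarith
      nlinarith [norm_nonneg y]
    have huy : u y = 0 := hslice y hyball hyN
    have hz2ball : z2 ∈ Metric.ball (0 : EuclideanSpace ℝ (Fin n)) 2 := by
      rw [hz2def, mem_ball_zero_iff, norm_smul, hedef, EuclideanSpace.norm_single]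
      rw [Real.norm_eq_abs, Real.norm_eq_abs, abs_one, mul_one,
        abs_of_nonneg (by linarith)]
      linarith
    have hxcomb : (2⁻¹:ℝ) • y + (2⁻¹:ℝ) • z2 = x := by
      rw [hydef]; module
    have h1 := huconv.2 hyball hz2ball (by norm_num : (0:ℝ) ≤ 2⁻¹)
      (by norm_num : (0:ℝ) ≤ 2⁻¹) (by norm_num)
    rw [hxcomb, huy] at h1
    simp only [smul_eq_mul, mul_zero, smul_zero] at h1
    have huz2 : u z2 ≤ 2 * G := by
      have hcomb2 : (x N / s) • ((2*s) • e) + (1 - x N / s) • (0:EuclideanSpace ℝ (Fin n))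
          = z2 := by
        rw [smul_zero, add_zero, smul_smul, hz2def]
        congr 1
        field_simp
      have h0ball : (0:EuclideanSpace ℝ (Fin n)) ∈ Metric.ball (0:EuclideanSpace ℝ (Fin n)) 2 :=
        Metric.mem_ball_self (by norm_num)
      have hu0 : u 0 = 0 := hslice 0 h0ball rfl
      have hcoef1 : (0:ℝ) ≤ x N / s := div_nonneg hx0 hs0.le
      have hcoef2 : (0:ℝ) ≤ 1 - x N / s := by
        rw [sub_nonneg]; exact (div_le_one hs0).2 hxs
      have h2 := huconv.2 h2se h0ball hcoef1 hcoef2 (by ring)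
      rw [hcomb2, hu0] at h2
      simp only [smul_eq_mul, mul_zero, smul_zero, add_zero] at h2
      have hval : u ((2*s) • e) = 2*G := by rw [hGdef]; ring
      rw [hval] at h2
      calc u z2 ≤ (x N / s) * (2*G) := h2
        _ ≤ 1 * (2*G) := by
            apply mul_le_mul_of_nonneg_right _ (by linarith)
            exact (div_le_one hs0).2 hxs
        _ = 2*G := one_mul _
    linarith
  -- minimization
  set φ₀ := quadf c d k N with hφ₀def
  have hφ₀x : ∀ x : EuclideanSpace ℝ (Fin n),
      φ₀ x = a/2 * w x + b/2 * (x N - s/2)^2 := by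
    intro x
    have hsum : ∑ i ∈ Finset.univ.erase N, c i * (x i)^2 = a/2 * w x := by
      rw [hwdef, Finset.mul_sum]
      apply Finset.sum_congr rfl
      intro i hi
      have hiN : i ≠ N := (Finset.mem_erase.1 hi).1
      simp [hcdef, hiN]
    have hsplit : ∑ i : Fin n, c i * (x i)^2
        = c N * (x N)^2 + ∑ i ∈ Finset.univ.erase N, c i * (x i)^2 :=
      (Finset.add_sum_erase Finset.univ _ (Finset.mem_univ N)).symm
    rw [hφ₀def]
    show (∑ i, c i * (x i)^2) + (d * x N + k) = a/2 * w x + b/2 * (x N - s/2)^2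
    have hcN : c N = b/2 := by rw [hcdef]; simp
    rw [hsplit, hsum, hcN, hddef, hkdef]
    ring
  have hcontφu : ContinuousOn (fun x => φ₀ x - u x) R :=
    ((quadf_contDiff c d k N).continuous.continuousOn).sub (hucont.mono hRsub)
  obtain ⟨z, hzR, hzmin⟩ := hRcompact.exists_isMinOn ⟨(s/2) • e, hx₀R⟩ hcontφu
  have hmin : ∀ x ∈ R, φ₀ z - u z ≤ φ₀ x - u x := fun x hx => hzmin hx
  set m : ℝ := φ₀ z - u z with hmdef
  have hm0 : m ≤ 0 := by
    have h1 := hmin _ hx₀R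
    have h2 : φ₀ ((s/2) • e) = 0 := by
      rw [hφ₀x, hwte, hcoord]
      simp
    have h3 : 0 ≤ u ((s/2) • e) := hnonneg _ (hRsub hx₀R)
    linarith
  have hbs : b * s^2 = 16*G + s^2 := by rw [hbdef]; field_simp
  have huzG := hub z hzR
  have hz1 : w z < 1/4 := by
    rcases lt_or_eq_of_le hzR.1 with h | h
    · exact h
    · exfalso
      have hφz : φ₀ z = a/2 * w z + b/2 * (z N - s/2)^2 := hφ₀x z
      have hineq : m ≥ a/8 - G := by
        rw [hmdef, hφz, h]
        nlinarith [mul_nonneg hb0.le (sq_nonneg (z N - s/2)), huzG]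
      rw [hadef] at hineq
      nlinarith
  have hz2 : 0 < z N := by
    rcases lt_or_eq_of_le hzR.2.1 with h | h
    · exact h
    · exfalso
      have huz : u z = 0 := hslice z (hRsub hzR) h.symm
      have hφz : φ₀ z = a/2 * w z + b/2 * (z N - s/2)^2 := hφ₀x z
      have hm : m = a/2 * w z + b/2 * (s/2)^2 := by
        rw [hmdef, hφz, huz, sub_zero, ← h]
        ring_nf
      have hwz := hwnonneg z
      have hq : b/2 * (s/2)^2 = (16*G + s^2)/8 := by
        rw [← hbs]; ring
      rw [hq] at hm
      nlinarith
  have hz3 : z N < s := by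
    rcases lt_or_eq_of_le hzR.2.2 with h | h
    · exact h
    · exfalso
      have hφz : φ₀ z = a/2 * w z + b/2 * (z N - s/2)^2 := hφ₀x z
      have hm : m ≥ b/2 * (s/2)^2 - G := by
        rw [hmdef, hφz, h]
        have hwz := hwnonneg z
        nlinarith
      have hq : b/2 * (s/2)^2 = (16*G + s^2)/8 := by
        rw [← hbs]; ring
      rw [hq] at hm
      nlinarith
  have hU : ∀ᶠ x in 𝓝 z, x ∈ R := by
    have hopen : IsOpen {x : EuclideanSpace ℝ (Fin n) | w x < 1/4 ∧ 0 < P N x ∧ P N x < s} :=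
      (isOpen_lt hwcont continuous_const).inter
        ((isOpen_lt continuous_const (P N).continuous).inter
          (isOpen_lt (P N).continuous continuous_const))
    have hzU : z ∈ {x : EuclideanSpace ℝ (Fin n) | w x < 1/4 ∧ 0 < P N x ∧ P N x < s} :=
      ⟨hz1, hz2, hz3⟩
    filter_upwards [hopen.mem_nhds hzU] with x hx
    exact ⟨le_of_lt hx.1, le_of_lt hx.2.1, le_of_lt hx.2.2⟩
  have hshift : ∀ x : EuclideanSpace ℝ (Fin n), quadf c d (k - m) N x = φ₀ x - m := by
    intro x
    rw [hφ₀def]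
    show (∑ i, c i * (x i)^2) + (d * x N + (k - m))
      = ((∑ i, c i * (x i)^2) + (d * x N + k)) - m
    ring
  refine ⟨quadf c d (k - m) N, z, ⟨quadf_contDiff c d (k-m) N, fun x => ?_⟩,
    hRsub hzR, ?_, ?_, ?_⟩
  · rw [quadf_hessian]
    constructor
    · rw [hsig1]
      nlinarith [mul_nonneg (by linarith : (0:ℝ) ≤ (n:ℝ)-1) ha0.le, hb0.le]
    · rw [hsig2]
      have h1 : 0 ≤ ((n:ℝ)-1) * a * b :=
        mul_nonneg (mul_nonneg (by linarith) ha0.le) hb0.le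
      have h2 : 0 ≤ ((n:ℝ)-1) * ((n:ℝ)-2) * a^2 / 2 :=
        div_nonneg (mul_nonneg (mul_nonneg (by linarith) (by linarith)) (sq_nonneg a))
          (by norm_num)
      exact add_nonneg h1 h2
  · rw [hshift, hmdef]; ring
  · filter_upwards [hU] with x hx
    have h := hmin x hx
    rw [hshift]
    linarith
  · rw [quadf_hessian, hsig2]
    exact hsig2lt
end

section
/- Let n ≥ 2, let Ω ⊂ ℝⁿ be a bounded open set, and let u be a continuous function on the closure of Ω that is a viscosity solution of σ₂(D²u) ≥ 1 in Ω. Let φ be a C² function on a neighborhood of the closure of Ω such that φ is convex and σ₂(D²φ(x)) < 1 for every x in the closure of Ω, and suppose φ ≥ u on ∂Ω. Then φ ≥ u on all of Ω. -/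
set_option maxHeartbeats 2000000


open scoped Topology

/-! ### Auxiliary lemmas -/


lemma S_single {n : ℕ} (M : Matrix (Fin n) (Fin n) ℝ) (i j : Fin n) (a b : ℝ) :
    ∑ k, ∑ l, (Pi.single i a : Fin n → ℝ) k * M k l * (Pi.single j b : Fin n → ℝ) l
      = a * M i j * b := by
  simp [Pi.single_apply, ite_mul, mul_ite, Finset.sum_ite_eq, Finset.sum_ite_eq']

lemma entry_le {n : ℕ} {M : Matrix (Fin n) (Fin n) ℝ}
    (hq : ∀ v : Fin n → ℝ, 0 ≤ ∑ k, ∑ l, v k * M k l * v l) (i j : Fin n) :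
    M i j * M j i ≤ M i i * M j j := by
  have key : ∀ s : ℝ, 0 ≤ M i i * (s * s) + (M i j + M j i) * s + M j j := by
    intro s
    have h := hq ((Pi.single i s : Fin n → ℝ) + (Pi.single j 1 : Fin n → ℝ))
    have hexp : ∑ k, ∑ l, ((Pi.single i s : Fin n → ℝ) + (Pi.single j 1 : Fin n → ℝ)) k * M k l *
        ((Pi.single i s : Fin n → ℝ) + (Pi.single j 1 : Fin n → ℝ)) l
        = M i i * (s * s) + (M i j + M j i) * s + M j j := by
      simp only [Pi.add_apply, add_mul, mul_add, Finset.sum_add_distrib, S_single]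
      ring
    rw [hexp] at h; exact h
  have hd := discrim_le_zero key
  rw [discrim] at hd
  nlinarith [sq_nonneg (M i j - M j i)]

lemma diag_nonneg {n : ℕ} {M : Matrix (Fin n) (Fin n) ℝ}
    (hq : ∀ v : Fin n → ℝ, 0 ≤ ∑ k, ∑ l, v k * M k l * v l) (i : Fin n) :
    0 ≤ M i i := by
  have h := hq (Pi.single i 1 : Fin n → ℝ)
  rwa [S_single, one_mul, mul_one] at h

lemma sigma1_nonneg_of_quadform {n : ℕ} {M : Matrix (Fin n) (Fin n) ℝ}
    (hq : ∀ v : Fin n → ℝ, 0 ≤ ∑ k, ∑ l, v k * M k l * v l) :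
    0 ≤ sigma1 M := by
  rw [sigma1, Matrix.trace]
  exact Finset.sum_nonneg fun i _ => diag_nonneg hq i

lemma sigma2_nonneg_of_quadform {n : ℕ} {M : Matrix (Fin n) (Fin n) ℝ}
    (hq : ∀ v : Fin n → ℝ, 0 ≤ ∑ k, ∑ l, v k * M k l * v l) :
    0 ≤ sigma2 M := by
  rw [sigma2]
  have h1 : M.trace ^ 2 - (M * M).trace
      = ∑ i, ∑ j, (M i i * M j j - M i j * M j i) := by
    simp only [Matrix.trace, Matrix.diag, Matrix.mul_apply, pow_two]
    rw [Finset.sum_mul_sum, ← Finset.sum_sub_distrib]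
    congr 1; ext i
    rw [← Finset.sum_sub_distrib]
  rw [h1]
  have h2 : 0 ≤ ∑ i, ∑ j, (M i i * M j j - M i j * M j i) :=
    Finset.sum_nonneg fun i _ => Finset.sum_nonneg fun j _ =>
      sub_nonneg.2 (entry_le hq i j)
  linarith

lemma sigma2_smul_one_continuous {n : ℕ} (H : Matrix (Fin n) (Fin n) ℝ) :
    Continuous fun t : ℝ => sigma2 (H + t • (1 : Matrix (Fin n) (Fin n) ℝ)) := by
  simp only [sigma2, Matrix.trace, Matrix.diag, Matrix.mul_apply, Matrix.add_apply,
    Matrix.smul_apply, Matrix.one_apply, smul_eq_mul]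
  fun_prop

/-! ### Calculus lemmas -/

section Quad
variable {E : Type*} [NormedAddCommGroup E] [NormedSpace ℝ E]

lemma quad_hasFDerivAt (C : E →L[ℝ] E →L[ℝ] ℝ) (z x : E) :
    HasFDerivAt (fun y => C (y - z) (y - z)) ((C + C.flip) (x - z)) x := by
  have h1 : HasFDerivAt (fun y : E => (y - z, y - z))
      ((ContinuousLinearMap.id ℝ E).prod (ContinuousLinearMap.id ℝ E)) x :=
    ((hasFDerivAt_id x).sub_const z).prodMk ((hasFDerivAt_id x).sub_const z)
  have h2 := (C.isBoundedBilinearMap.hasFDerivAt (x - z, x - z)).comp x h1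
  exact h2

lemma psi_hasFDerivAt (C : E →L[ℝ] E →L[ℝ] ℝ) (l : E →L[ℝ] ℝ) (c : ℝ) (z x : E) :
    HasFDerivAt (fun y => c + l (y - z) + C (y - z) (y - z))
      (l + (C + C.flip) (x - z)) x := by
  have hl : HasFDerivAt (fun y : E => c + l (y - z)) l x := by
    have := (l.hasFDerivAt (x := x - z)).comp x ((hasFDerivAt_id x).sub_const z)
    simpa using this.const_add c
  exact hl.add (quad_hasFDerivAt C z x)

lemma psi_fderiv2 (C : E →L[ℝ] E →L[ℝ] ℝ) (l : E →L[ℝ] ℝ) (c : ℝ) (z x : E) :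
    fderiv ℝ (fderiv ℝ (fun y => c + l (y - z) + C (y - z) (y - z))) x
      = C + C.flip := by
  have hfd : fderiv ℝ (fun y => c + l (y - z) + C (y - z) (y - z))
      = fun x => l + (C + C.flip) (x - z) :=
    funext fun x => (psi_hasFDerivAt C l c z x).fderiv
  rw [hfd]
  have hD : HasFDerivAt (fun x : E => l + (C + C.flip) (x - z)) (C + C.flip) x := by
    have := ((C + C.flip).hasFDerivAt (x := x - z)).comp x ((hasFDerivAt_id x).sub_const z)
    simpa using this.const_add l
  exact hD.fderiv

end Quad

lemma hessian_quad {n : ℕ} (C : EuclideanSpace ℝ (Fin n) →L[ℝ] EuclideanSpace ℝ (Fin n) →L[ℝ] ℝ)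
    (l : EuclideanSpace ℝ (Fin n) →L[ℝ] ℝ) (c : ℝ) (z x : EuclideanSpace ℝ (Fin n)) (i j : Fin n) :
    hessian (fun y => c + l (y - z) + C (y - z) (y - z)) x i j
      = C (EuclideanSpace.single i 1) (EuclideanSpace.single j 1)
        + C (EuclideanSpace.single j 1) (EuclideanSpace.single i 1) := by
  rw [hessian, iteratedFDeriv_two_apply, psi_fderiv2]
  simp [Matrix.cons_val_zero, Matrix.cons_val_one, ContinuousLinearMap.flip_apply]

lemma psi_contDiff {n : ℕ} (C : EuclideanSpace ℝ (Fin n) →L[ℝ] EuclideanSpace ℝ (Fin n) →L[ℝ] ℝ)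
    (l : EuclideanSpace ℝ (Fin n) →L[ℝ] ℝ) (c : ℝ) (z : EuclideanSpace ℝ (Fin n)) :
    ContDiff ℝ 2 (fun y => c + l (y - z) + C (y - z) (y - z)) := by
  have h1 : ContDiff ℝ 2 fun y : EuclideanSpace ℝ (Fin n) => (y - z, y - z) :=
    (contDiff_id.sub contDiff_const).prodMk (contDiff_id.sub contDiff_const)
  exact (contDiff_const.add (l.contDiff.comp (contDiff_id.sub contDiff_const))).add
    (C.isBoundedBilinearMap.contDiff.comp h1)

noncomputable def Jform (n : ℕ) :
    EuclideanSpace ℝ (Fin n) →L[ℝ] EuclideanSpace ℝ (Fin n) →L[ℝ] ℝ :=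
  ∑ i, (EuclideanSpace.proj i).smulRight (EuclideanSpace.proj i)

lemma Jform_apply {n : ℕ} (v w : EuclideanSpace ℝ (Fin n)) :
    Jform n v w = ∑ i, v i * w i := by
  simp [Jform, ContinuousLinearMap.sum_apply, smul_eq_mul]

lemma Jform_single {n : ℕ} (i j : Fin n) :
    Jform n (EuclideanSpace.single i 1) (EuclideanSpace.single j 1)
      = if i = j then (1:ℝ) else 0 := by
  rw [Jform_apply]
  simp [EuclideanSpace.single_apply, ite_mul, Finset.sum_ite_eq, Finset.sum_ite_eq', eq_comm]

lemma Jform_self {n : ℕ} (v : EuclideanSpace ℝ (Fin n)) :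
    Jform n v v = ‖v‖ * ‖v‖ := by
  have h := real_inner_self_eq_norm_mul_norm (F := EuclideanSpace ℝ (Fin n)) v
  rw [PiLp.inner_apply] at h
  rw [Jform_apply, ← h]
  simp [RCLike.inner_apply, mul_comm, pow_two]


/-- Comparison principle: a convex `C²` function `φ` with `σ₂(D²φ) < 1` on the closure
of a bounded open `Ω` that dominates a viscosity solution of `σ₂(D²u) ≥ 1` on `∂Ω`
dominates it in all of `Ω`. (Convexity of `φ` is expressed by nonnegativity of the
Hessian quadratic form on a neighborhood of the closure.) -/
theorem comparison_principle {n : ℕ} (hn : 2 ≤ n)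
    (Ω : Set (EuclideanSpace ℝ (Fin n))) (hΩo : IsOpen Ω) (hΩb : Bornology.IsBounded Ω)
    (u : EuclideanSpace ℝ (Fin n) → ℝ) (hucont : ContinuousOn u (closure Ω))
    (hvisc : ViscositySupersol u Ω)
    (φ : EuclideanSpace ℝ (Fin n) → ℝ)
    (V : Set (EuclideanSpace ℝ (Fin n))) (hVo : IsOpen V) (hVΩ : closure Ω ⊆ V)
    (hφC2 : ContDiffOn ℝ 2 φ V)
    (hφconv : ∀ x ∈ V, ∀ v : Fin n → ℝ, 0 ≤ ∑ i, ∑ j, v i * hessian φ x i j * v j)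
    (hφσ : ∀ x ∈ closure Ω, sigma2 (hessian φ x) < 1)
    (hbdry : ∀ x ∈ frontier Ω, u x ≤ φ x) :
    ∀ x ∈ Ω, u x ≤ φ x := by
  intro x₀ hx₀
  by_contra hcon
  push_neg at hcon
  have hφcont : ContinuousOn φ (closure Ω) := (hφC2.continuousOn).mono hVΩ
  have hK : IsCompact (closure Ω) :=
    Metric.isCompact_of_isClosed_isBounded isClosed_closure hΩb.closure
  obtain ⟨z, hzK, hzmax⟩ := hK.exists_isMaxOn ⟨x₀, subset_closure hx₀⟩ (hucont.sub hφcont)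
  set m := u z - φ z with hm
  have hmax : ∀ y ∈ closure Ω, u y - φ y ≤ m := fun y hy => hzmax hy
  have hmpos : 0 < m := lt_of_lt_of_le (sub_pos.2 hcon) (hmax x₀ (subset_closure hx₀))
  have hzΩ : z ∈ Ω := by
    by_contra hz
    have hzf : z ∈ frontier Ω := by rw [hΩo.frontier_eq]; exact ⟨hzK, hz⟩
    have := hbdry z hzf
    rw [hm] at hmpos; linarith
  have hzV : V ∈ 𝓝 z := hVo.mem_nhds (hVΩ hzK)
  -- derivatives of φ at z
  set f₁ := fderiv ℝ φ with hf₁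
  have hφdiffAt : ∀ y ∈ V, HasFDerivAt φ (f₁ y) y := fun y hy =>
    ((hφC2.differentiableOn two_ne_zero).differentiableAt (hVo.mem_nhds hy)).hasFDerivAt
  have hφdiff : ∀ᶠ y in 𝓝 z, HasFDerivAt φ (f₁ y) y := by
    filter_upwards [hzV] with y hy using hφdiffAt y hy
  have hf1d : HasFDerivAt f₁ (fderiv ℝ f₁ z) z := by
    have h2 : ContDiffAt ℝ 2 φ z := hφC2.contDiffAt hzV
    have h1 : ContDiffAt ℝ 1 f₁ z := h2.fderiv_right (by norm_num)
    exact (h1.differentiableAt one_ne_zero).hasFDerivAt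
  set B := fderiv ℝ f₁ z with hB
  have hBsymm : ∀ v w, B v w = B w v := second_derivative_symmetric_of_eventually hφdiff hf1d
  set H := hessian φ z with hH
  have hHB : ∀ i j, H i j
      = B (EuclideanSpace.single i 1) (EuclideanSpace.single j 1) := by
    intro i j
    rw [hH, hessian, iteratedFDeriv_two_apply]
    simp [hB, hf₁]
  -- choose t > 0
  have h0 : sigma2 (H + (0:ℝ) • (1 : Matrix (Fin n) (Fin n) ℝ)) < 1 := by
    simpa using hφσ z hzK
  have hev : ∀ᶠ t in 𝓝[>] (0:ℝ),
      sigma2 (H + t • (1 : Matrix (Fin n) (Fin n) ℝ)) < 1 :=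
    (((sigma2_smul_one_continuous H).continuousAt).eventually_lt continuousAt_const h0).filter_mono
      nhdsWithin_le_nhds
  obtain ⟨t, htlt, htmem⟩ := (hev.and eventually_mem_nhdsWithin).exists
  have htpos : 0 < t := htmem
  -- the test function ψ
  set l := f₁ z with hl
  set C : EuclideanSpace ℝ (Fin n) →L[ℝ] EuclideanSpace ℝ (Fin n) →L[ℝ] ℝ :=
    (1/2 : ℝ) • B + (t/2) • Jform n with hC
  set ψ : EuclideanSpace ℝ (Fin n) → ℝ :=
    fun y => u z + l (y - z) + C (y - z) (y - z) with hψ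
  -- the Hessian of ψ
  have hψhess : ∀ x, hessian ψ x = H + t • (1 : Matrix (Fin n) (Fin n) ℝ) := by
    intro x
    funext i j
    rw [hψ]
    rw [hessian_quad]
    rw [Matrix.add_apply, Matrix.smul_apply, Matrix.one_apply, smul_eq_mul]
    rw [hC]
    simp only [ContinuousLinearMap.add_apply, ContinuousLinearMap.smul_apply, smul_eq_mul,
      Jform_single]
    rw [hHB i j, hBsymm (EuclideanSpace.single j 1) (EuclideanSpace.single i 1)]
    by_cases hij : i = j
    · subst hij; simp; ring
    · have hji : ¬ (j = i) := fun h => hij h.symm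
      simp [hij, hji]; ring
  -- quadratic form of H + t • 1
  have hquadK : ∀ v : Fin n → ℝ,
      0 ≤ ∑ k, ∑ l', v k * (H + t • (1 : Matrix (Fin n) (Fin n) ℝ)) k l' * v l' := by
    intro v
    have hsplit : ∀ k l', v k * (H + t • (1 : Matrix (Fin n) (Fin n) ℝ)) k l' * v l'
        = v k * H k l' * v l' + t * (v k * (if k = l' then (1:ℝ) else 0) * v l') := by
      intro k l'
      rw [Matrix.add_apply, Matrix.smul_apply, Matrix.one_apply, smul_eq_mul]
      ring
    simp only [hsplit, Finset.sum_add_distrib, ← Finset.mul_sum]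
    have h2 : ∀ k, ∑ l', v k * (if k = l' then (1:ℝ) else 0) * v l' = v k * v k := by
      intro k
      simp [mul_ite, ite_mul, Finset.sum_ite_eq, Finset.sum_ite_eq']
    have h3 : 0 ≤ ∑ k, ∑ l', v k * (if k = l' then (1:ℝ) else 0) * v l' := by
      simp only [h2]
      exact Finset.sum_nonneg fun k _ => mul_self_nonneg _
    have h4 := hφconv z (hVΩ hzK) v
    rw [← hH] at h4
    exact add_nonneg h4 (mul_nonneg htpos.le h3)
  have h2cv : TwoConvex ψ := by
    refine ⟨by rw [hψ]; exact psi_contDiff C l (u z) z, fun x => ?_⟩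
    rw [hψhess x]
    exact ⟨sigma1_nonneg_of_quadform hquadK, sigma2_nonneg_of_quadform hquadK⟩
  -- Taylor estimate
  set C₀ : EuclideanSpace ℝ (Fin n) →L[ℝ] EuclideanSpace ℝ (Fin n) →L[ℝ] ℝ :=
    (1/2 : ℝ) • B with hC₀
  set g : EuclideanSpace ℝ (Fin n) → ℝ :=
    fun y => φ y - ((0:ℝ) + l (y - z) + C₀ (y - z) (y - z)) with hg
  have hgderiv : ∀ y ∈ V, HasFDerivAt g (f₁ y - (l + B (y - z))) y := by
    intro y hy
    have h1 := psi_hasFDerivAt C₀ l 0 z y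
    have h2 := (hφdiffAt y hy).sub h1
    refine h2.congr_fderiv ?_
    congr 1
    ext v
    simp only [ContinuousLinearMap.add_apply, hC₀, ContinuousLinearMap.smul_apply,
      ContinuousLinearMap.flip_apply, smul_eq_mul]
    rw [hBsymm v (y - z)]
    ring
  have hgz : g z = φ z := by simp [hg]
  have hsmall : ∀ᶠ y in 𝓝 z, ‖f₁ y - (l + B (y - z))‖ ≤ t/2 * ‖y - z‖ := by
    have hlo := hf1d.isLittleO
    have := hlo.def (show (0:ℝ) < t/2 by positivity)
    filter_upwards [this] with y hy
    have : f₁ y - f₁ z - B (y - z) = f₁ y - (l + B (y - z)) := by rw [hl]; abel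
    rwa [this] at hy
  have hball : ∀ᶠ y in 𝓝 z,
      y ∈ Ω ∧ y ∈ V ∧ ‖f₁ y - (l + B (y - z))‖ ≤ t/2 * ‖y - z‖ := by
    filter_upwards [hΩo.mem_nhds hzΩ, hzV, hsmall] with y h1 h2 h3
    exact ⟨h1, h2, h3⟩
  obtain ⟨r, hr0, hrsub⟩ := Metric.eventually_nhds_iff_ball.1 hball
  have hg_bound : ∀ x ∈ Metric.ball z r, g x - g z ≤ t/2 * (‖x - z‖ * ‖x - z‖) := by
    intro x hx
    have hsub : Metric.closedBall z ‖x - z‖ ⊆ Metric.ball z r := by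
      intro y hy
      rw [Metric.mem_closedBall] at hy
      rw [Metric.mem_ball] at hx ⊢
      calc dist y z ≤ ‖x - z‖ := hy
        _ = dist x z := (dist_eq_norm x z).symm
        _ < r := hx
    have key := (convex_closedBall z ‖x - z‖).norm_image_sub_le_of_norm_hasFDerivWithin_le
      (f := g) (f' := fun y => f₁ y - (l + B (y - z))) (C := t/2 * ‖x - z‖)
      (fun y hy => (hgderiv y (hrsub y (hsub hy)).2.1).hasFDerivWithinAt)
      (fun y hy => by
        have h1 := (hrsub y (hsub hy)).2.2
        have h2 : ‖y - z‖ ≤ ‖x - z‖ := by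
          rw [← dist_eq_norm, ← dist_eq_norm]
          exact Metric.mem_closedBall.1 hy
        refine h1.trans ?_
        have := div_pos htpos two_pos
        nlinarith)
      (Metric.mem_closedBall_self (norm_nonneg _))
      (by rw [Metric.mem_closedBall, dist_eq_norm])
    calc g x - g z ≤ ‖g x - g z‖ := le_abs_self _
      _ ≤ t/2 * ‖x - z‖ * ‖x - z‖ := key
      _ = t/2 * (‖x - z‖ * ‖x - z‖) := by ring
  -- domination
  have hdom : ∀ᶠ x in 𝓝 z, u x ≤ ψ x := by
    filter_upwards [Metric.ball_mem_nhds z hr0] with x hx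
    have hxΩ : x ∈ Ω := (hrsub x hx).1
    have h1 : u x ≤ φ x + m := by
      have := hmax x (subset_closure hxΩ)
      linarith
    have hCsplit : C (x - z) (x - z)
        = C₀ (x - z) (x - z) + t/2 * Jform n (x - z) (x - z) := by
      rw [hC, hC₀]
      simp [ContinuousLinearMap.add_apply, ContinuousLinearMap.smul_apply, smul_eq_mul]
    have h2 : ψ x - (φ x + m) = t/2 * (‖x - z‖ * ‖x - z‖) - (g x - g z) := by
      rw [hψ, hgz]
      simp only [hg, hm]
      rw [hCsplit, Jform_self]
      ring
    have h3 := hg_bound x hx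
    have h4 : 0 ≤ ψ x - (φ x + m) := by rw [h2]; linarith
    linarith [h1, h4]
  have hψz : ψ z = u z := by simp [hψ]
  have hfinal := hvisc ψ h2cv z hzΩ hψz hdom
  rw [hψhess z] at hfinal
  exact absurd hfinal (not_le.2 htlt)
end
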